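/- Let f be a ternary cubic with real coefficients and suppose c ∈ ℝ satisfies (1/2)·Σ_{p,q=1}^{3} B_{pq}·∂²B_{ij}/∂x_p∂x_q = c·x_i·x_j for all i, j ∈ {1,2,3}. Then one has the polynomial identity (1/2)·Σ_{i,j=1}^{3} B_{ij}·∂²H/∂x_i∂x_j = 6·c·f in ℝ[x₁,x₂,x₃]. -/

import Mathlib

open MvPolynomial

noncomputable section

lemma pderiv_comm' (i j : Fin 3) (p : MvPolynomial (Fin 3) ℝ) :
    pderiv i (pderiv j p) = pderiv j (pderiv i p) := by
  induction p using MvPolynomial.induction_on with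
  | C a => simp
  | add p q hp hq => simp [hp, hq]
  | mul_X p n hp =>
      simp only [pderiv_mul, map_add, pderiv_X, hp]
      rcases eq_or_ne n i with rfl | hi <;> rcases eq_or_ne n j with h | hj <;>
        simp_all [Pi.single_apply]

lemma single_sub_add (v : Fin 3 →₀ ℕ) (i : Fin 3) (h : v i ≠ 0) :
    v - Finsupp.single i 1 + Finsupp.single i 1 = v := by
  ext j
  rcases eq_or_ne j i with rfl | hj
  · simp [Finsupp.single_apply]; omega
  · simp [Finsupp.single_apply, hj.symm, Ne.symm hj]

lemma X_mul_pderiv_monomial (i : Fin 3) (v : Fin 3 →₀ ℕ) (a : ℝ) :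
    X i * pderiv i (monomial v a) = C ((v i : ℝ)) * monomial v a := by
  rw [pderiv_monomial]
  rcases eq_or_ne (v i) 0 with h | h
  · simp [h]
  · rw [show (X i : MvPolynomial (Fin 3) ℝ) = monomial (Finsupp.single i 1) 1 from rfl,
      monomial_mul, C_mul_monomial, add_comm, single_sub_add v i h, one_mul, mul_comm]

lemma degree_fin3 (v : Fin 3 →₀ ℕ) : v.degree = ∑ i : Fin 3, v i := by
  rw [Finsupp.degree]
  exact Finset.sum_subset (Finset.subset_univ _) (fun x _ hx => by
    simpa using Finsupp.notMem_support_iff.mp hx)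

lemma euler {n : ℕ} {p : MvPolynomial (Fin 3) ℝ} (hp : p.IsHomogeneous n) :
    ∑ i : Fin 3, X i * pderiv i p = C (n : ℝ) * p := by
  conv_lhs => rw [p.as_sum]
  conv_rhs => rw [p.as_sum]
  simp_rw [map_sum, Finset.mul_sum]
  rw [Finset.sum_comm]
  apply Finset.sum_congr rfl
  intro v hv
  rw [Finset.sum_congr rfl (fun i _ => X_mul_pderiv_monomial i v (coeff v p))]
  rw [← Finset.sum_mul, ← map_sum, ← Nat.cast_sum, ← degree_fin3]
  have hvn : v.degree = n := by
    rw [Finsupp.degree_eq_weight_one]; exact hp (mem_support_iff.mp hv)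
  rw [hvn]

lemma isHom_pderiv {n : ℕ} {p : MvPolynomial (Fin 3) ℝ} (hp : p.IsHomogeneous n)
    (i : Fin 3) : (pderiv i p).IsHomogeneous (n - 1) := by
  conv_lhs => rw [p.as_sum]
  rw [map_sum]
  apply IsHomogeneous.sum
  intro v hv
  rw [pderiv_monomial]
  rcases eq_or_ne (v i) 0 with h | h
  · simp [h]
    exact isHomogeneous_zero _ _ _
  · apply isHomogeneous_monomial
    have hvn : v.degree = n := by
      rw [Finsupp.degree_eq_weight_one]; exact hp (mem_support_iff.mp hv)
    rw [degree_fin3, Fin.sum_univ_three]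
    rw [degree_fin3, Fin.sum_univ_three] at hvn
    simp only [Finsupp.tsub_apply]
    have hle : 1 ≤ v i := Nat.one_le_iff_ne_zero.mpr h
    fin_cases i <;> simp_all [Finsupp.single_apply] <;> omega

lemma pderiv_isHom_zero {p : MvPolynomial (Fin 3) ℝ} (hp : p.IsHomogeneous 0)
    (i : Fin 3) : pderiv i p = 0 := by
  conv_lhs => rw [p.as_sum]
  rw [map_sum]
  apply Finset.sum_eq_zero
  intro v hv
  have h0 : v.degree = 0 := by
    rw [Finsupp.degree_eq_weight_one]; exact hp (mem_support_iff.mp hv)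
  have : v = 0 := (Finsupp.degree_eq_zero_iff v).mp h0
  subst this
  simp [pderiv_monomial]

lemma pderiv_ofNat3 (i : Fin 3) :
    pderiv i ((3 : MvPolynomial (Fin 3) ℝ)) = 0 := by
  rw [← map_ofNat (C : ℝ →+* MvPolynomial (Fin 3) ℝ) 3]; exact pderiv_C

lemma pderiv_ofNat2 (i : Fin 3) :
    pderiv i ((2 : MvPolynomial (Fin 3) ℝ)) = 0 := by
  rw [← map_ofNat (C : ℝ →+* MvPolynomial (Fin 3) ℝ) 2]; exact pderiv_C

/-- The Hessian matrix of second partial derivatives of `f`. -/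
def hessian (f : MvPolynomial (Fin 3) ℝ) : Matrix (Fin 3) (Fin 3) (MvPolynomial (Fin 3) ℝ) :=
  fun i j => pderiv i (pderiv j f)

/-- The adjugate (cofactor) matrix of the Hessian matrix of `f`. -/
def Bmat (f : MvPolynomial (Fin 3) ℝ) : Matrix (Fin 3) (Fin 3) (MvPolynomial (Fin 3) ℝ) :=
  (hessian f).adjugate

set_option maxHeartbeats 2000000 in
/-- If `(1/2) ∑_{p,q} B_{pq} ∂²B_{ij}/∂x_p∂x_q = c x_i x_j` for all `i, j`, then
`(1/2) ∑_{i,j} B_{ij} ∂²H/∂x_i∂x_j = 6 c f`, where `H` is the Hessian determinant. -/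
theorem stmt5 (f : MvPolynomial (Fin 3) ℝ) (hf : f.IsHomogeneous 3) (c : ℝ)
    (hc : ∀ i j : Fin 3,
      C (1/2 : ℝ) * ∑ p : Fin 3, ∑ q : Fin 3,
          Bmat f p q * pderiv p (pderiv q (Bmat f i j)) =
        C c * X i * X j) :
    C (1/2 : ℝ) * ∑ i : Fin 3, ∑ j : Fin 3,
        Bmat f i j * pderiv i (pderiv j (hessian f).det) =
      C (6 * c) * f := by
  have s10 : pderiv (1 : Fin 3) (pderiv (0 : Fin 3) f) = pderiv 0 (pderiv 1 f) :=
    pderiv_comm' _ _ _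
  have s20 : pderiv (2 : Fin 3) (pderiv (0 : Fin 3) f) = pderiv 0 (pderiv 2 f) :=
    pderiv_comm' _ _ _
  have s21 : pderiv (2 : Fin 3) (pderiv (1 : Fin 3) f) = pderiv 1 (pderiv 2 f) :=
    pderiv_comm' _ _ _
  -- fourth derivatives vanish
  have hS3 : ∀ a b i j : Fin 3, pderiv a (pderiv b (pderiv i (pderiv j f))) = 0 := by
    intro a b i j
    apply pderiv_isHom_zero
    simpa using isHom_pderiv (isHom_pderiv (isHom_pderiv hf j) i) b
  -- Euler identities
  have hE1 : ∑ i : Fin 3, X i * pderiv i f = 3 * f := by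
    have h := euler hf
    norm_num at h
    convert h using 2
    exact (map_ofNat C 3).symm
  have hE2 : ∀ j : Fin 3, ∑ i : Fin 3, X i * pderiv i (pderiv j f) = 2 * pderiv j f := by
    intro j
    have h := euler (isHom_pderiv hf j)
    norm_num at h
    convert h using 2
    exact (map_ofNat C 2).symm
  have hE3 : ∑ p : Fin 3, ∑ q : Fin 3, pderiv p (pderiv q f) * X p * X q = 6 * f := by
    simp only [Fin.sum_univ_three] at hE1 hE2 ⊢
    linear_combination X (0 : Fin 3) * hE2 0 + X (1 : Fin 3) * hE2 1 + X (2 : Fin 3) * hE2 2 +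
      2 * hE1
  -- Jacobi formula for the derivative of the Hessian determinant
  have hJ : ∀ q : Fin 3, pderiv q (hessian f).det =
      ∑ i : Fin 3, ∑ j : Fin 3, Bmat f i j * pderiv q (pderiv i (pderiv j f)) := by
    intro q
    rw [Matrix.det_fin_three]
    simp only [Fin.sum_univ_three, Bmat, Matrix.adjugate_fin_three, hessian]
    simp only [Matrix.cons_val', Matrix.cons_val_zero, Matrix.cons_val_one, Matrix.head_cons,
      Matrix.empty_val', Matrix.cons_val_fin_one, Matrix.head_fin_const, Matrix.cons_val_two,
      Matrix.tail_cons, Matrix.of_apply]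
    simp only [pderiv_mul, map_add, map_sub]
    simp only [s10, s20, s21]
    ring
  -- trace identity : 3 H = ∑ g_ij B_ij
  have hT : (3 : MvPolynomial (Fin 3) ℝ) * (hessian f).det =
      ∑ i : Fin 3, ∑ j : Fin 3, pderiv i (pderiv j f) * Bmat f i j := by
    rw [Matrix.det_fin_three]
    simp only [Fin.sum_univ_three, Bmat, Matrix.adjugate_fin_three, hessian]
    simp only [Matrix.cons_val', Matrix.cons_val_zero, Matrix.cons_val_one, Matrix.head_cons,
      Matrix.empty_val', Matrix.cons_val_fin_one, Matrix.head_fin_const, Matrix.cons_val_two,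
      Matrix.tail_cons, Matrix.of_apply]
    simp only [s10, s20, s21]
    ring
  -- second derivative of H
  have hJ' : ∀ p q : Fin 3, pderiv p (pderiv q (hessian f).det) =
      ∑ i : Fin 3, ∑ j : Fin 3, pderiv p (Bmat f i j) * pderiv q (pderiv i (pderiv j f)) := by
    intro p q
    have h := congrArg (pderiv p) (hJ q)
    simpa only [map_sum, pderiv_mul, hS3, mul_zero, add_zero] using h
  -- ∑ g_ij ∂_q B_ij = 2 ∂_q H
  have hT' : ∀ q : Fin 3,
      ∑ i : Fin 3, ∑ j : Fin 3, pderiv i (pderiv j f) * pderiv q (Bmat f i j) =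
        2 * pderiv q (hessian f).det := by
    intro q
    have h := congrArg (pderiv q) hT
    simp only [map_sum, pderiv_mul, pderiv_ofNat3, zero_mul, zero_add] at h
    have hj := hJ q
    simp only [Fin.sum_univ_three] at h hj ⊢
    linear_combination hj - h
  -- key lemma : ∑ g_ij ∂_p∂_q B_ij = ∂_p∂_q H
  have hL3 : ∀ p q : Fin 3,
      ∑ i : Fin 3, ∑ j : Fin 3, pderiv i (pderiv j f) * pderiv p (pderiv q (Bmat f i j)) =
        pderiv p (pderiv q (hessian f).det) := by
    intro p q
    have h := congrArg (pderiv p) (hT' q)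
    simp only [map_sum, pderiv_mul, pderiv_ofNat2, zero_mul, zero_add] at h
    have h2 := hJ' q p
    have hcm : pderiv q (pderiv p (hessian f).det) = pderiv p (pderiv q (hessian f).det) :=
      pderiv_comm' _ _ _
    simp only [Fin.sum_univ_three] at h h2 ⊢
    linear_combination h + h2 - hcm
  -- final assembly
  have hrc : (C (6 * c) : MvPolynomial (Fin 3) ℝ) = 6 * C c := by
    rw [map_mul, map_ofNat]
  rw [hrc]
  simp only [Fin.sum_univ_three] at hc hL3 hE3 ⊢
  linear_combination
    (- (C (1/2 : ℝ) * Bmat f 0 0) * hL3 0 0) - C (1/2 : ℝ) * Bmat f 0 1 * hL3 0 1 -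
    C (1/2 : ℝ) * Bmat f 0 2 * hL3 0 2 - C (1/2 : ℝ) * Bmat f 1 0 * hL3 1 0 -
    C (1/2 : ℝ) * Bmat f 1 1 * hL3 1 1 - C (1/2 : ℝ) * Bmat f 1 2 * hL3 1 2 -
    C (1/2 : ℝ) * Bmat f 2 0 * hL3 2 0 - C (1/2 : ℝ) * Bmat f 2 1 * hL3 2 1 -
    C (1/2 : ℝ) * Bmat f 2 2 * hL3 2 2 +
    pderiv (0 : Fin 3) (pderiv (0 : Fin 3) f) * hc 0 0 +
    pderiv (0 : Fin 3) (pderiv (1 : Fin 3) f) * hc 0 1 +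
    pderiv (0 : Fin 3) (pderiv (2 : Fin 3) f) * hc 0 2 +
    pderiv (1 : Fin 3) (pderiv (0 : Fin 3) f) * hc 1 0 +
    pderiv (1 : Fin 3) (pderiv (1 : Fin 3) f) * hc 1 1 +
    pderiv (1 : Fin 3) (pderiv (2 : Fin 3) f) * hc 1 2 +
    pderiv (2 : Fin 3) (pderiv (0 : Fin 3) f) * hc 2 0 +
    pderiv (2 : Fin 3) (pderiv (1 : Fin 3) f) * hc 2 1 +
    pderiv (2 : Fin 3) (pderiv (2 : Fin 3) f) * hc 2 2 +
    C c * hE3
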